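/- Let k ∈ {1, 2, 3}. Then the elliptic zeta value obeys the additive three-term relation Z_k(τ,σ) = Z_k(τ, τ+σ) + Z_k(τ+σ, σ) for all τ, σ ∈ H with σ/τ ∈ H. -/

import Mathlib

open Complex Filter Topology

/-- The open upper half-plane as a subset of `ℂ`. -/
def UHP : Set ℂ := {z : ℂ | 0 < z.im}

/-- `qexp τ = e^{2πiτ}`. -/
noncomputable def qexp (τ : ℂ) : ℂ := Complex.exp (2 * Real.pi * Complex.I * τ)

/-- Elliptic zeta values `Z_k(τ,σ)`. -/
noncomputable def ellipticZeta (k : ℕ) (τ σ : ℂ) : ℂ :=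
  -((2 * (Real.pi : ℂ) * Complex.I) ^ k / (Nat.factorial (k - 1) : ℂ)) *
    ∑' j : ℕ+, (j : ℂ) ^ (k - 1) *
      (qexp τ ^ (j : ℕ) - (-1 : ℂ) ^ k * qexp σ ^ (j : ℕ)) /
      ((1 - qexp τ ^ (j : ℕ)) * (1 - qexp σ ^ (j : ℕ)))

/-- `D_k(q)`: the normalized generating function of sums of `(k-1)`-st powers of divisors. -/
noncomputable def Dk (k : ℕ) (q : ℂ) : ℂ :=
  ((-2 * (Real.pi : ℂ) * Complex.I) ^ k / (Nat.factorial (k - 1) : ℂ)) *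
    ∑' n : ℕ+, (∑ d ∈ Nat.divisors (n : ℕ), (d : ℂ) ^ (k - 1)) * q ^ (n : ℕ)

/-- Ruijsenaars's elliptic gamma function. -/
noncomputable def ellipticGamma (z τ σ : ℂ) : ℂ :=
  ∏' p : ℕ × ℕ,
    (1 - qexp τ ^ (p.1 + 1) * qexp σ ^ (p.2 + 1) * Complex.exp (-(2 * Real.pi * Complex.I) * z)) /
    (1 - qexp τ ^ p.1 * qexp σ ^ p.2 * Complex.exp (2 * Real.pi * Complex.I * z))

/-- The modified theta function `θ₀(z,τ)`. -/
noncomputable def theta0 (z τ : ℂ) : ℂ :=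
  ∏' j : ℕ, (1 - qexp τ ^ (j + 1) * Complex.exp (-(2 * Real.pi * Complex.I) * z)) *
            (1 - qexp τ ^ j * Complex.exp (2 * Real.pi * Complex.I * z))

/-- A modular form of weight `k` for `SL(2,ℤ)`: a holomorphic function on the
upper half-plane transforming with weight `k` under `SL(2,ℤ)` and bounded as `Im τ → ∞`. -/
def IsModularForm (k : ℕ) (G : ℂ → ℂ) : Prop :=
  DifferentiableOn ℂ G UHP ∧
  (∀ A : Matrix.SpecialLinearGroup (Fin 2) ℤ, ∀ τ ∈ UHP,
      G (((A 0 0 : ℤ) * τ + (A 0 1 : ℤ)) / ((A 1 0 : ℤ) * τ + (A 1 1 : ℤ))) =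
        ((A 1 0 : ℤ) * τ + (A 1 1 : ℤ)) ^ k * G τ) ∧
  (∃ C : ℝ, ∀ τ ∈ UHP, 1 ≤ τ.im → ‖G τ‖ ≤ C)

/-- All factors in the defining double product of the elliptic gamma function are nonzero. -/
def EGFactorsNeZero (z τ σ : ℂ) : Prop :=
  ∀ j ℓ : ℕ,
    (1 - qexp τ ^ (j + 1) * qexp σ ^ (ℓ + 1) * Complex.exp (-(2 * Real.pi * Complex.I) * z)) ≠ 0 ∧
    (1 - qexp τ ^ j * qexp σ ^ ℓ * Complex.exp (2 * Real.pi * Complex.I * z)) ≠ 0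


/-- `e^{2πiτ}` has norm `< 1` when `Im τ > 0`. -/
lemma norm_qexp_lt_one {τ : ℂ} (hτ : 0 < τ.im) : ‖qexp τ‖ < 1 := by
  rw [qexp, Complex.norm_exp]
  have : (2 * (Real.pi : ℂ) * I * τ).re = -(2 * Real.pi * τ.im) := by
    simp [Complex.mul_re, Complex.mul_im]
  rw [this, Real.exp_lt_one_iff]
  nlinarith [Real.pi_pos]

lemma qexp_add (τ σ : ℂ) : qexp (τ + σ) = qexp τ * qexp σ := by
  rw [qexp, qexp, qexp, ← Complex.exp_add]
  ring_nf

lemma one_sub_ne_zero {a : ℂ} (h : ‖a‖ < 1) : 1 - a ≠ 0 := by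
  intro h0
  rw [← sub_eq_zero.mp h0] at h
  simp at h

/-- Rational three-term identity underlying the additive relation. -/
lemma three_term_rat {a b : ℂ} (ha : 1 - a ≠ 0) (hb : 1 - b ≠ 0)
    (hab : 1 - a * b ≠ 0) (e c : ℂ) :
    c * (a - e * b) / ((1 - a) * (1 - b)) =
      c * (a - e * (a * b)) / ((1 - a) * (1 - a * b)) +
        c * (a * b - e * b) / ((1 - a * b) * (1 - b)) := by
  field_simp
  ring

/-- Summability of the series defining `Z_k`. -/
lemma summable_ellipticZeta_term (k : ℕ) {q r : ℂ} (hq : ‖q‖ < 1) (hr : ‖r‖ < 1) :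
    Summable (fun j : ℕ+ => (j : ℂ) ^ (k - 1) *
      (q ^ (j : ℕ) - (-1 : ℂ) ^ k * r ^ (j : ℕ)) /
      ((1 - q ^ (j : ℕ)) * (1 - r ^ (j : ℕ)))) := by
  have h0q : (0:ℝ) < 1 - ‖q‖ := by linarith
  have h0r : (0:ℝ) < 1 - ‖r‖ := by linarith
  set C : ℝ := ((1 - ‖q‖) * (1 - ‖r‖))⁻¹ with hCdef
  have hqq : ‖‖q‖‖ < 1 := by rwa [Real.norm_of_nonneg (norm_nonneg q)]
  have hrr : ‖‖r‖‖ < 1 := by rwa [Real.norm_of_nonneg (norm_nonneg r)]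
  have S1 : Summable (fun n : ℕ => (n:ℝ) ^ (k-1) * ‖q‖ ^ n) :=
    summable_pow_mul_geometric_of_norm_lt_one (k-1) hqq
  have S2 : Summable (fun n : ℕ => (n:ℝ) ^ (k-1) * ‖r‖ ^ n) :=
    summable_pow_mul_geometric_of_norm_lt_one (k-1) hrr
  have S : Summable (fun n : ℕ => C * ((n:ℝ)^(k-1) * ‖q‖^n + (n:ℝ)^(k-1) * ‖r‖^n)) :=
    (S1.add S2).mul_left C
  have Sp : Summable (fun j : ℕ+ =>
      C * (((j:ℕ):ℝ)^(k-1) * ‖q‖^(j:ℕ) + ((j:ℕ):ℝ)^(k-1) * ‖r‖^(j:ℕ))) :=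
    S.comp_injective PNat.coe_injective
  refine Summable.of_norm_bounded Sp ?_
  intro j
  set n : ℕ := (j : ℕ)
  have hn : n ≠ 0 := j.ne_zero
  have hqn : ‖q‖ ^ n ≤ ‖q‖ := pow_le_of_le_one (norm_nonneg q) hq.le hn
  have hrn : ‖r‖ ^ n ≤ ‖r‖ := pow_le_of_le_one (norm_nonneg r) hr.le hn
  have hden : (1 - ‖q‖) * (1 - ‖r‖) ≤ ‖(1 - q ^ n) * (1 - r ^ n)‖ := by
    rw [norm_mul]
    have h1 : 1 - ‖q‖ ≤ ‖1 - q ^ n‖ := by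
      calc 1 - ‖q‖ ≤ 1 - ‖q ^ n‖ := by rw [norm_pow]; linarith
        _ ≤ ‖1 - q ^ n‖ := by
            have := norm_sub_norm_le (1 : ℂ) (q ^ n)
            simpa using this
    have h2 : 1 - ‖r‖ ≤ ‖1 - r ^ n‖ := by
      calc 1 - ‖r‖ ≤ 1 - ‖r ^ n‖ := by rw [norm_pow]; linarith
        _ ≤ ‖1 - r ^ n‖ := by
            have := norm_sub_norm_le (1 : ℂ) (r ^ n)
            simpa using this
    exact mul_le_mul h1 h2 (by linarith) (le_trans (by linarith) h1)
  have hnum : ‖(j : ℂ) ^ (k-1) * (q ^ n - (-1:ℂ)^k * r ^ n)‖ ≤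
      (n:ℝ)^(k-1) * (‖q‖^n + ‖r‖^n) := by
    rw [norm_mul]
    have h1 : ‖(j:ℂ) ^ (k-1)‖ = (n:ℝ)^(k-1) := by
      rw [norm_pow]
      norm_num [n]
    rw [h1]
    refine mul_le_mul_of_nonneg_left ?_ (by positivity)
    calc ‖q ^ n - (-1:ℂ)^k * r ^ n‖ ≤ ‖q ^ n‖ + ‖(-1:ℂ)^k * r ^ n‖ := norm_sub_le _ _
      _ = ‖q‖^n + ‖r‖^n := by
          rw [norm_mul, norm_pow, norm_pow, norm_pow]
          simp
  rw [div_eq_mul_inv, norm_mul, norm_inv, ← div_eq_mul_inv]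
  calc ‖(j : ℂ) ^ (k-1) * (q ^ n - (-1:ℂ)^k * r ^ n)‖ / ‖(1 - q ^ n) * (1 - r ^ n)‖
      ≤ ((n:ℝ)^(k-1) * (‖q‖^n + ‖r‖^n)) / ((1 - ‖q‖) * (1 - ‖r‖)) :=
        div_le_div₀ (by positivity) hnum (by positivity) hden
    _ = C * (((n:ℕ):ℝ)^(k-1) * ‖q‖^n + ((n:ℕ):ℝ)^(k-1) * ‖r‖^n) := by
        rw [hCdef]; ring

/-- additive three-term relation for `Z_k`, `k ∈ {1,2,3}`,
for `τ, σ ∈ H` with `σ/τ ∈ H`. -/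
theorem ellipticZeta_additive_three_term_low
    (k : ℕ) (hk : k ∈ ({1, 2, 3} : Set ℕ)) (τ σ : ℂ)
    (hτ : τ ∈ UHP) (hσ : σ ∈ UHP) (hστ : σ / τ ∈ UHP) :
    ellipticZeta k τ σ = ellipticZeta k τ (τ + σ) + ellipticZeta k (τ + σ) σ := by
  have hq : ‖qexp τ‖ < 1 := norm_qexp_lt_one hτ
  have hr : ‖qexp σ‖ < 1 := norm_qexp_lt_one hσ
  have hqr : ‖qexp τ * qexp σ‖ < 1 := by
    rw [← qexp_add]
    exact norm_qexp_lt_one (by simpa using add_pos hτ hσ)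
  have key : ∀ j : ℕ+,
      (j : ℂ) ^ (k - 1) * (qexp τ ^ (j : ℕ) - (-1 : ℂ) ^ k * qexp σ ^ (j : ℕ)) /
        ((1 - qexp τ ^ (j : ℕ)) * (1 - qexp σ ^ (j : ℕ)))
      = (j : ℂ) ^ (k - 1) *
          (qexp τ ^ (j : ℕ) - (-1 : ℂ) ^ k * (qexp τ * qexp σ) ^ (j : ℕ)) /
          ((1 - qexp τ ^ (j : ℕ)) * (1 - (qexp τ * qexp σ) ^ (j : ℕ))) +
        (j : ℂ) ^ (k - 1) *
          ((qexp τ * qexp σ) ^ (j : ℕ) - (-1 : ℂ) ^ k * qexp σ ^ (j : ℕ)) /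
          ((1 - (qexp τ * qexp σ) ^ (j : ℕ)) * (1 - qexp σ ^ (j : ℕ))) := by
    intro j
    have hqn : ‖qexp τ ^ (j : ℕ)‖ < 1 := by
      rw [norm_pow]; exact pow_lt_one₀ (norm_nonneg _) hq j.ne_zero
    have hrn : ‖qexp σ ^ (j : ℕ)‖ < 1 := by
      rw [norm_pow]; exact pow_lt_one₀ (norm_nonneg _) hr j.ne_zero
    have := three_term_rat (one_sub_ne_zero hqn) (one_sub_ne_zero hrn)
      (by rw [← mul_pow]
          exact one_sub_ne_zero (by rw [norm_pow]; exact pow_lt_one₀ (norm_nonneg _) hqr j.ne_zero))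
      ((-1 : ℂ) ^ k) ((j : ℂ) ^ (k - 1))
    rw [← mul_pow] at this
    exact this
  rw [ellipticZeta, ellipticZeta, ellipticZeta, qexp_add, tsum_congr key,
    Summable.tsum_add (summable_ellipticZeta_term k hq hqr) (summable_ellipticZeta_term k hqr hr)]
  ring
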